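/- For every 0 < ε < 1, there is 0 < η'(ε) < 1 such that for every positive integer n and every Banach space X, the following holds: given a bounded linear operator U : X → ℓ∞ⁿ with ‖U‖ = 1 and x₀ ∈ X with ‖x₀‖ = 1 such that ‖U(x₀)‖ > 1 − η'(ε), there exist a bounded operator V : X → ℓ∞ⁿ with ‖V‖ = 1 and z₀ ∈ X with ‖z₀‖ = 1 satisfying ‖V z₀‖ = 1, ‖z₀ − x₀‖ < ε, and ‖V − U‖ < ε. -/

import Mathlib

universe u

open Filter Topology

section Aux
variable {X : Type*} [NormedAddCommGroup X] [NormedSpace ℝ X]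

set_option maxHeartbeats 1000000 in
/-- Tailored Ekeland variational principle on the closed unit ball. -/
lemma ekeland_ball [CompleteSpace X] (f : X →L[ℝ] ℝ) (hf : ‖f‖ ≤ 1)
    (x₀ : X) (hx₀ : ‖x₀‖ ≤ 1) (η δ : ℝ) (hη : 0 < η) (hδ : 0 < δ)
    (hfx₀ : ‖f‖ - f x₀ ≤ η) :
    ∃ z : X, ‖z‖ ≤ 1 ∧ ‖z - x₀‖ ≤ η / δ ∧
      ∀ y : X, ‖y‖ ≤ 1 → f y ≤ f z + δ * ‖y - z‖ := by
  classical
  set u : X → ℝ := fun x => ‖f‖ - f x with hu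
  have hu0 : ∀ x : X, ‖x‖ ≤ 1 → 0 ≤ u x := by
    intro x hx
    have : f x ≤ ‖f‖ * ‖x‖ := le_trans (le_abs_self _) (f.le_opNorm x)
    have : f x ≤ ‖f‖ := le_trans this (by nlinarith [f.opNorm_nonneg])
    simpa [hu] using sub_nonneg.2 this
  -- the "better point" set
  set S : X → Set X := fun x => {y | ‖y‖ ≤ 1 ∧ u y + δ * ‖y - x‖ ≤ u x} with hS
  have hmemS : ∀ x : X, ‖x‖ ≤ 1 → x ∈ S x := by
    intro x hx; exact ⟨hx, by simp⟩
  -- infimum of u over S x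
  have hbdd : ∀ x : X, BddBelow (u '' S x) := by
    intro x
    refine ⟨0, ?_⟩
    rintro a ⟨y, hy, rfl⟩
    exact hu0 y hy.1
  -- choice of next point
  have hstep : ∀ (x : X) (m : ℕ), ‖x‖ ≤ 1 → ∃ x' : X, x' ∈ S x ∧
      u x' ≤ sInf (u '' S x) + (1/2) ^ m := by
    intro x m hx
    obtain ⟨a, ha, ha2⟩ := Real.lt_sInf_add_pos ((Set.image_nonempty).2 ⟨x, hmemS x hx⟩)
      (show (0:ℝ) < (1/2)^m by positivity)
    obtain ⟨y, hy, rfl⟩ := ha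
    exact ⟨y, hy, le_of_lt ha2⟩
  -- construct the sequence
  set next : ℕ → X → X := fun m x => if hx : ‖x‖ ≤ 1 then Classical.choose (hstep x m hx) else x
    with hnext
  set seq : ℕ → X := fun n => Nat.rec x₀ (fun m xm => next m xm) n with hseqdef
  have hseq0 : seq 0 = x₀ := rfl
  have hseqsucc : ∀ n, seq (n+1) = next n (seq n) := fun n => rfl
  have hball : ∀ n, ‖seq n‖ ≤ 1 := by
    intro n
    induction n with
    | zero => exact hx₀
    | succ m ih =>
      rw [hseqsucc, hnext]
      simp only [ih, dif_pos]
      exact (Classical.choose_spec (hstep (seq m) m ih)).1.1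
  have hstep1 : ∀ n, seq (n+1) ∈ S (seq n) := by
    intro n
    rw [hseqsucc, hnext]
    simp only [hball n, dif_pos]
    exact (Classical.choose_spec (hstep (seq n) n (hball n))).1
  have hstep2 : ∀ n, u (seq (n+1)) ≤ sInf (u '' S (seq n)) + (1/2) ^ n := by
    intro n
    rw [hseqsucc, hnext]
    simp only [hball n, dif_pos]
    exact (Classical.choose_spec (hstep (seq n) n (hball n))).2
  -- chain inequality
  have hchain : ∀ n m, n ≤ m → u (seq m) + δ * ‖seq m - seq n‖ ≤ u (seq n) := by
    intro n m hnm
    induction m, hnm using Nat.le_induction with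
    | base => simp
    | succ m hnm ih =>
      have h1 := (hstep1 m).2
      have htri : ‖seq (m+1) - seq n‖ ≤ ‖seq (m+1) - seq m‖ + ‖seq m - seq n‖ :=
        norm_sub_le_norm_sub_add_norm_sub _ _ _
      nlinarith [hδ]
  have hdec : ∀ n m, n ≤ m → u (seq m) ≤ u (seq n) := by
    intro n m hnm
    have := hchain n m hnm
    nlinarith [norm_nonneg (seq m - seq n), hδ]
  -- limit of u ∘ seq
  have hbddseq : BddBelow (Set.range fun n => u (seq n)) :=
    ⟨0, by rintro a ⟨n, rfl⟩; exact hu0 _ (hball n)⟩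
  set L : ℝ := ⨅ n, u (seq n) with hL
  have hLtendsto : Tendsto (fun n => u (seq n)) atTop (𝓝 L) :=
    tendsto_atTop_ciInf (fun a b hab => hdec a b hab) hbddseq
  have hLle : ∀ n, L ≤ u (seq n) := fun n => ciInf_le hbddseq n
  -- Cauchy
  have hcauchy : CauchySeq seq := by
    apply cauchySeq_of_le_tendsto_0 (fun N => (u (seq N) - L) / δ)
    · intro n m N hn hm
      rcases le_total n m with h | h
      · have h1 := hchain n m h
        have : dist (seq n) (seq m) = ‖seq m - seq n‖ := by
          rw [dist_eq_norm, norm_sub_rev]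
        rw [this]
        have h2 := hdec N n hn
        have h3 := hLle m
        rw [le_div_iff₀ hδ]
        nlinarith
      · have h1 := hchain m n h
        rw [dist_eq_norm]
        rw [le_div_iff₀ hδ]
        have h2 := hdec N m hm
        have h3 := hLle n
        nlinarith
    · have : Tendsto (fun N => u (seq N) - L) atTop (𝓝 (L - L)) :=
        hLtendsto.sub tendsto_const_nhds
      simp only [sub_self] at this
      simpa using this.div_const δ
  obtain ⟨z, hz⟩ := cauchySeq_tendsto_of_complete hcauchy
  have hfz : Tendsto (fun n => u (seq n)) atTop (𝓝 (u z)) := by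
    have : Continuous u := by
      have : u = fun x => ‖f‖ - f x := rfl
      rw [this]; exact continuous_const.sub f.continuous
    exact (this.tendsto z).comp hz
  have huzL : u z = L := tendsto_nhds_unique hfz hLtendsto
  refine ⟨z, ?_, ?_, ?_⟩
  · exact le_of_tendsto ((continuous_norm.tendsto z).comp hz) (Filter.Eventually.of_forall hball)
  · have key : ∀ m : ℕ, ‖seq m - x₀‖ ≤ η / δ := by
      intro m
      have h1 := hchain 0 m (Nat.zero_le m)
      rw [hseq0] at h1
      have h2 : u x₀ ≤ η := by
        have : f x₀ ≥ ‖f‖ - η := by linarith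
        simpa [hu] using hfx₀
      have h3 := hu0 (seq m) (hball m)
      rw [le_div_iff₀ hδ]
      nlinarith
    have : Tendsto (fun m => ‖seq m - x₀‖) atTop (𝓝 ‖z - x₀‖) :=
      ((continuous_norm.comp (continuous_id.sub continuous_const)).tendsto z).comp hz
    exact le_of_tendsto this (Filter.Eventually.of_forall key)
  · -- z belongs to every S (seq n)
    have hzS : ∀ n, u z + δ * ‖z - seq n‖ ≤ u (seq n) := by
      intro n
      have hlim : Tendsto (fun m => u (seq m) + δ * ‖seq m - seq n‖) atTop
          (𝓝 (u z + δ * ‖z - seq n‖)) := by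
        apply Tendsto.add hfz
        apply Tendsto.const_mul
        exact ((continuous_norm.comp (continuous_id.sub continuous_const)).tendsto z).comp hz
      apply le_of_tendsto hlim
      filter_upwards [eventually_ge_atTop n] with m hm
      exact hchain n m hm
    intro y hy
    by_contra hcon
    push_neg at hcon
    have hyu : u y + δ * ‖y - z‖ < u z := by
      simp only [hu]
      linarith
    have hymem : ∀ n, y ∈ S (seq n) := by
      intro n
      refine ⟨hy, ?_⟩
      have htri : ‖y - seq n‖ ≤ ‖y - z‖ + ‖z - seq n‖ :=
        norm_sub_le_norm_sub_add_norm_sub _ _ _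
      have := hzS n
      nlinarith
    have hkey : ∀ n : ℕ, u z ≤ u y + (1/2 : ℝ) ^ n := by
      intro n
      have h1 : sInf (u '' S (seq n)) ≤ u y := csInf_le (hbdd _) ⟨y, hymem n, rfl⟩
      have h2 := hstep2 n
      have h3 : u z ≤ u (seq (n+1)) := by
        have := hzS (n+1)
        nlinarith [norm_nonneg (z - seq (n+1))]
      calc u z ≤ u (seq (n+1)) := h3
        _ ≤ sInf (u '' S (seq n)) + (1/2)^n := h2
        _ ≤ u y + (1/2)^n := add_le_add_left h1 _
    have huzy : u z ≤ u y := by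
      by_contra hc
      push_neg at hc
      obtain ⟨n, hn⟩ := exists_pow_lt_of_lt_one (sub_pos.2 hc) (by norm_num : (1/2:ℝ) < 1)
      have := hkey n
      linarith
    have : 0 ≤ δ * ‖y - z‖ := mul_nonneg hδ.le (norm_nonneg _)
    linarith

set_option maxHeartbeats 1000000 in
lemma bpb_scalar [CompleteSpace X] (f : X →L[ℝ] ℝ) (x₀ : X) (hf : ‖f‖ ≤ 1)
    (hx₀ : ‖x₀‖ = 1) (η δ : ℝ) (hη : 0 < η) (hδ : 0 < δ) (hηδ : η + δ < 1/2)
    (hfx : 1 - η < f x₀)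
    (ekeland : ∃ z : X, ‖z‖ ≤ 1 ∧ ‖z - x₀‖ ≤ η / δ ∧
      ∀ y : X, ‖y‖ ≤ 1 → f y ≤ f z + δ * ‖y - z‖) :
    ∃ (g : X →L[ℝ] ℝ) (z : X), ‖g‖ = 1 ∧ ‖z‖ = 1 ∧ g z = 1 ∧
      ‖z - x₀‖ ≤ η / δ ∧ ‖g - f‖ ≤ η + 2 * δ := by
  classical
  obtain ⟨z, hz1, hzx₀, hzmax⟩ := ekeland
  -- the cone generated by B - z
  set K : Set X := {w | ∃ t : ℝ, 0 ≤ t ∧ ∃ y : X, ‖y‖ ≤ 1 ∧ w = t • (y - z)} with hKdef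
  have hK0 : (0 : X) ∈ K := ⟨0, le_rfl, z, hz1, by simp⟩
  have hKadd : ∀ w₁ ∈ K, ∀ w₂ ∈ K, w₁ + w₂ ∈ K := by
    rintro w₁ ⟨t₁, ht₁, y₁, hy₁, rfl⟩ w₂ ⟨t₂, ht₂, y₂, hy₂, rfl⟩
    rcases eq_or_lt_of_le (add_nonneg ht₁ ht₂) with h0 | hpos
    · have h1 : t₁ = 0 := by linarith
      have h2 : t₂ = 0 := by linarith
      simpa [h1, h2] using hK0
    · refine ⟨t₁ + t₂, le_of_lt hpos, (t₁/(t₁+t₂)) • y₁ + (t₂/(t₁+t₂)) • y₂, ?_, ?_⟩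
      · calc ‖(t₁/(t₁+t₂)) • y₁ + (t₂/(t₁+t₂)) • y₂‖
            ≤ ‖(t₁/(t₁+t₂)) • y₁‖ + ‖(t₂/(t₁+t₂)) • y₂‖ := norm_add_le _ _
          _ = (t₁/(t₁+t₂)) * ‖y₁‖ + (t₂/(t₁+t₂)) * ‖y₂‖ := by
              rw [norm_smul, norm_smul, Real.norm_eq_abs, Real.norm_eq_abs,
                abs_of_nonneg (by positivity), abs_of_nonneg (by positivity)]
          _ ≤ (t₁/(t₁+t₂)) * 1 + (t₂/(t₁+t₂)) * 1 := by
              gcongr <;> positivity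
          _ = 1 := by field_simp
      · have hne : t₁ + t₂ ≠ 0 := ne_of_gt hpos
        have key : (t₁ + t₂) • ((t₁/(t₁+t₂)) • y₁ + (t₂/(t₁+t₂)) • y₂ - z)
            = t₁ • (y₁ - z) + t₂ • (y₂ - z) := by
          rw [smul_sub, smul_add, smul_smul, smul_smul,
            mul_div_cancel₀ _ hne, mul_div_cancel₀ _ hne, add_smul,
            smul_sub, smul_sub]
          abel
        rw [key]
  have hKsmul : ∀ (c : ℝ), 0 ≤ c → ∀ w ∈ K, c • w ∈ K := by
    rintro c hc w ⟨t, ht, y, hy, rfl⟩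
    exact ⟨c * t, mul_nonneg hc ht, y, hy, by rw [smul_smul]⟩
  have hfK : ∀ w ∈ K, f w ≤ δ * ‖w‖ := by
    rintro w ⟨t, ht, y, hy, rfl⟩
    have h1 : f (y - z) ≤ δ * ‖y - z‖ := by
      have := hzmax y hy
      simp only [map_sub]
      linarith
    rw [map_smul, norm_smul, Real.norm_eq_abs, abs_of_nonneg ht, smul_eq_mul,
      mul_comm δ, mul_assoc]
    calc t * f (y - z) ≤ t * (δ * ‖y - z‖) := mul_le_mul_of_nonneg_left h1 ht
      _ = t * (‖y - z‖ * δ) := by ring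
  -- the sublinear functional
  set s : X → ℝ := fun w => sInf ((fun k => δ * ‖w + k‖ - f k) '' K) with hsdef
  have hsne : ∀ w : X, ((fun k => δ * ‖w + k‖ - f k) '' K).Nonempty :=
    fun w => ⟨_, ⟨0, hK0, rfl⟩⟩
  have hmb : ∀ w : X, ∀ a ∈ (fun k => δ * ‖w + k‖ - f k) '' K, -(δ * ‖w‖) ≤ a := by
    rintro w a ⟨k, hk, rfl⟩
    show -(δ * ‖w‖) ≤ δ * ‖w + k‖ - f k
    have h1 : f k ≤ δ * ‖k‖ := hfK k hk
    have h2 : ‖k‖ ≤ ‖w + k‖ + ‖w‖ := by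
      have := norm_add_le (-w) (w + k)
      simp only [neg_add_cancel_left, norm_neg] at this
      linarith
    have h3 : δ * ‖k‖ ≤ δ * (‖w + k‖ + ‖w‖) := mul_le_mul_of_nonneg_left h2 hδ.le
    rw [mul_add] at h3
    linarith
  have hsbdd : ∀ w : X, BddBelow ((fun k => δ * ‖w + k‖ - f k) '' K) :=
    fun w => ⟨-(δ * ‖w‖), fun a ha => hmb w a ha⟩
  have hs_le : ∀ (w : X), ∀ k ∈ K, s w ≤ δ * ‖w + k‖ - f k :=
    fun w k hk => csInf_le (hsbdd w) ⟨k, hk, rfl⟩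
  have hs_lb : ∀ w : X, -(δ * ‖w‖) ≤ s w := fun w => le_csInf (hsne w) (hmb w)
  have hs_norm : ∀ w : X, s w ≤ δ * ‖w‖ := by
    intro w
    have := hs_le w 0 hK0
    simpa using this
  have hs_add : ∀ w₁ w₂ : X, s (w₁ + w₂) ≤ s w₁ + s w₂ := by
    intro w₁ w₂
    have key : ∀ a ∈ (fun k => δ * ‖w₁ + k‖ - f k) '' K,
        ∀ b ∈ (fun k => δ * ‖w₂ + k‖ - f k) '' K, s (w₁ + w₂) ≤ a + b := by
      rintro a ⟨k₁, hk₁, rfl⟩ b ⟨k₂, hk₂, rfl⟩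
      have h1 : s (w₁ + w₂) ≤ δ * ‖w₁ + w₂ + (k₁ + k₂)‖ - f (k₁ + k₂) :=
        hs_le _ _ (hKadd _ hk₁ _ hk₂)
      have h2 : ‖w₁ + w₂ + (k₁ + k₂)‖ ≤ ‖w₁ + k₁‖ + ‖w₂ + k₂‖ := by
        have heq : w₁ + w₂ + (k₁ + k₂) = (w₁ + k₁) + (w₂ + k₂) := by abel
        rw [heq]; exact norm_add_le _ _
      simp only [map_add] at h1 ⊢
      nlinarith
    have step1 : ∀ b ∈ (fun k => δ * ‖w₂ + k‖ - f k) '' K, s (w₁ + w₂) - s w₁ ≤ b := by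
      intro b hb
      have : s (w₁ + w₂) - b ≤ s w₁ := by
        refine le_csInf (hsne w₁) ?_
        intro a ha
        linarith [key a ha b hb]
      linarith
    have : s (w₁ + w₂) - s w₁ ≤ s w₂ := le_csInf (hsne w₂) step1
    linarith
  have hs_smul : ∀ (c : ℝ), 0 < c → ∀ w : X, s (c • w) = c * s w := by
    have half : ∀ (c : ℝ), 0 < c → ∀ w : X, s (c • w) ≤ c * s w := by
      intro c hc w
      have key : ∀ a ∈ (fun k => δ * ‖w + k‖ - f k) '' K, s (c • w) ≤ c * a := by
        rintro a ⟨k, hk, rfl⟩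
        have h1 : s (c • w) ≤ δ * ‖c • w + c • k‖ - f (c • k) :=
          hs_le _ _ (hKsmul c hc.le k hk)
        rw [← smul_add, norm_smul, Real.norm_eq_abs, abs_of_nonneg hc.le, map_smul,
          smul_eq_mul] at h1
        calc s (c • w) ≤ δ * (c * ‖w + k‖) - c * f k := h1
          _ = c * (δ * ‖w + k‖ - f k) := by ring
      have : s (c • w) / c ≤ s w := by
        refine le_csInf (hsne w) ?_
        intro a ha
        rw [div_le_iff₀ hc]
        calc s (c • w) ≤ c * a := key a ha
          _ = a * c := mul_comm _ _
      calc s (c • w) = (s (c • w) / c) * c := by field_simp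
        _ ≤ s w * c := mul_le_mul_of_nonneg_right this hc.le
        _ = c * s w := mul_comm _ _
    intro c hc w
    refine le_antisymm (half c hc w) ?_
    have h2 := half c⁻¹ (by positivity) (c • w)
    rw [inv_smul_smul₀ (ne_of_gt hc)] at h2
    calc c * s w ≤ c * (c⁻¹ * s (c • w)) := mul_le_mul_of_nonneg_left h2 hc.le
      _ = s (c • w) := by field_simp
  -- Hahn-Banach
  obtain ⟨h, -, hh⟩ := exists_extension_of_le_sublinear ⟨⊥, 0⟩ s hs_smul hs_add
    (by
      rintro ⟨x, hx⟩
      have hx0 : x = 0 := by simpa using hx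
      subst hx0
      have := hs_lb 0
      simpa using this)
  have habs : ∀ w : X, |h w| ≤ δ * ‖w‖ := by
    intro w
    rw [abs_le]
    constructor
    · have := le_trans (hh (-w)) (hs_norm (-w))
      simp only [map_neg, norm_neg] at this
      linarith
    · exact le_trans (hh w) (hs_norm w)
  set h' : X →L[ℝ] ℝ := LinearMap.mkContinuous h δ (fun w => by
    rw [Real.norm_eq_abs]; exact habs w) with hh'def
  have hh'apply : ∀ w : X, h' w = h w := fun w => rfl
  have hh'norm : ‖h'‖ ≤ δ := LinearMap.mkContinuous_norm_le h hδ.le _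
  have hhK : ∀ k ∈ K, f k ≤ h' k := by
    intro k hk
    have h1 : h (-k) ≤ s (-k) := hh (-k)
    have h2 : s (-k) ≤ δ * ‖-k + k‖ - f k := hs_le (-k) k hk
    simp only [neg_add_cancel, norm_zero, mul_zero, zero_sub] at h2
    rw [hh'apply]
    have : h (-k) = -h k := by rw [map_neg]
    linarith [h1.trans h2, this ▸ (h1.trans h2)]
  set q : X →L[ℝ] ℝ := f - h' with hqdef
  have hqf : ‖q - f‖ ≤ δ := by
    have : q - f = -h' := by rw [hqdef]; abel
    rw [this, norm_neg]
    exact hh'norm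
  have hqB : ∀ y : X, ‖y‖ ≤ 1 → q y ≤ q z := by
    intro y hy
    have hmem : y - z ∈ K := ⟨1, zero_le_one, y, hy, by rw [one_smul]⟩
    have := hhK _ hmem
    simp only [hqdef, ContinuousLinearMap.sub_apply, map_sub] at *
    linarith
  have hqx₀ : 1 - η - δ < q x₀ := by
    have h1 : |h' x₀| ≤ δ := by
      have := habs x₀
      rw [hx₀, mul_one] at this
      exact this
    have h2 := abs_le.mp h1
    simp only [hqdef, ContinuousLinearMap.sub_apply]
    linarith
  have hqz_pos : 0 < q z := by
    have := hqB x₀ (le_of_eq hx₀)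
    have h3 : (0:ℝ) < 1 - η - δ := by linarith
    linarith
  have hqnorm : ‖q‖ = q z := by
    refine le_antisymm ?_ ?_
    · refine ContinuousLinearMap.opNorm_le_bound q hqz_pos.le ?_
      intro y
      rcases eq_or_ne y 0 with rfl | hy0
      · simp
      · have hw : ‖(‖y‖⁻¹ • y)‖ ≤ 1 := by
          rw [norm_smul, Real.norm_eq_abs, abs_of_nonneg (by positivity),
            inv_mul_cancel₀ (norm_ne_zero_iff.2 hy0)]
        have hw2 : ‖(-(‖y‖⁻¹ • y))‖ ≤ 1 := by rwa [norm_neg]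
        have e1 : q (‖y‖⁻¹ • y) ≤ q z := hqB _ hw
        have e2 : q (-(‖y‖⁻¹ • y)) ≤ q z := hqB _ hw2
        rw [map_neg] at e2
        have e3 : |q (‖y‖⁻¹ • y)| ≤ q z := abs_le.2 ⟨by linarith, e1⟩
        have e4 : q (‖y‖⁻¹ • y) = ‖y‖⁻¹ * q y := by rw [map_smul, smul_eq_mul]
        rw [e4, abs_mul, abs_of_nonneg (by positivity)] at e3
        rw [Real.norm_eq_abs]
        calc |q y| = ‖y‖ * (‖y‖⁻¹ * |q y|) := by
              rw [← mul_assoc, mul_inv_cancel₀ (norm_ne_zero_iff.2 hy0), one_mul]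
          _ ≤ ‖y‖ * q z := by
              exact mul_le_mul_of_nonneg_left e3 (norm_nonneg y)
          _ = q z * ‖y‖ := mul_comm _ _
    · calc q z ≤ |q z| := le_abs_self _
        _ = ‖q z‖ := (Real.norm_eq_abs _).symm
        _ ≤ ‖q‖ * ‖z‖ := q.le_opNorm z
        _ ≤ ‖q‖ * 1 := by
            exact mul_le_mul_of_nonneg_left hz1 (norm_nonneg q)
        _ = ‖q‖ := mul_one _
  have hznorm : ‖z‖ = 1 := by
    refine le_antisymm hz1 ?_
    have h1 : q z ≤ ‖q‖ * ‖z‖ := le_trans (le_abs_self _) (q.le_opNorm z)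
    rw [hqnorm] at h1
    nlinarith
  have hqnormpos : 0 < ‖q‖ := by rw [hqnorm]; exact hqz_pos
  refine ⟨‖q‖⁻¹ • q, z, ?_, hznorm, ?_, hzx₀, ?_⟩
  · rw [show ‖(‖q‖⁻¹ • q)‖ = ‖(‖q‖⁻¹ : ℝ)‖ * ‖q‖ from norm_smul (‖q‖⁻¹) q,
      Real.norm_eq_abs, abs_of_nonneg (by positivity),
      inv_mul_cancel₀ (ne_of_gt hqnormpos)]
  · rw [ContinuousLinearMap.smul_apply, smul_eq_mul, ← hqnorm,
      inv_mul_cancel₀ (ne_of_gt hqnormpos)]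
  · have hub : ‖q‖ ≤ 1 + δ := by
      calc ‖q‖ = ‖f - h'‖ := rfl
        _ ≤ ‖f‖ + ‖h'‖ := norm_sub_le _ _
        _ ≤ 1 + δ := add_le_add hf hh'norm
    have hlb : 1 - η - δ ≤ ‖q‖ := by
      rw [hqnorm]
      exact le_trans (le_of_lt hqx₀) (hqB x₀ (le_of_eq hx₀))
    have hgq : ‖‖q‖⁻¹ • q - q‖ ≤ η + δ := by
      have heq : ‖q‖⁻¹ • q - q = (‖q‖⁻¹ - 1) • q := by
        ext x
        simp only [ContinuousLinearMap.sub_apply, ContinuousLinearMap.smul_apply, smul_eq_mul]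
        ring
      rw [heq, show ‖(‖q‖⁻¹ - 1) • q‖ = ‖(‖q‖⁻¹ - 1 : ℝ)‖ * ‖q‖ from norm_smul (‖q‖⁻¹ - 1) q,
        Real.norm_eq_abs]
      rcases le_total (‖q‖⁻¹) 1 with hle | hle
      · rw [abs_of_nonpos (by linarith), neg_sub]
        have : (1 - ‖q‖⁻¹) * ‖q‖ = ‖q‖ - 1 := by
          field_simp
        rw [this]
        linarith
      · rw [abs_of_nonneg (by linarith)]
        have : (‖q‖⁻¹ - 1) * ‖q‖ = 1 - ‖q‖ := by
          field_simp
        rw [this]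
        linarith
    calc ‖‖q‖⁻¹ • q - f‖ = ‖(‖q‖⁻¹ • q - q) + (q - f)‖ := by
          congr 1; abel
      _ ≤ ‖‖q‖⁻¹ • q - q‖ + ‖q - f‖ := norm_add_le _ _
      _ ≤ (η + δ) + δ := add_le_add hgq hqf
      _ = η + 2 * δ := by ring


set_option maxHeartbeats 1000000 in
theorem stmt15' (ε : ℝ) (hε : 0 < ε) (hε1 : ε < 1) {n : ℕ} (hn : 0 < n)
    [CompleteSpace X]
    (U : X →L[ℝ] (Fin n → ℝ)) (x₀ : X)
    (hU : ‖U‖ = 1) (hx₀ : ‖x₀‖ = 1) (hUx₀ : 1 - ε^2/8 < ‖U x₀‖)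
    (bpb_scalar : ∀ (f : X →L[ℝ] ℝ), ‖f‖ ≤ 1 → 1 - ε^2/8 < f x₀ →
      ∃ (g : X →L[ℝ] ℝ) (z : X), ‖g‖ = 1 ∧ ‖z‖ = 1 ∧ g z = 1 ∧
        ‖z - x₀‖ ≤ (ε^2/8) / (ε/4) ∧ ‖g - f‖ ≤ ε^2/8 + 2 * (ε/4)) :
    ∃ (V : X →L[ℝ] (Fin n → ℝ)) (z₀ : X),
      ‖V‖ = 1 ∧ ‖z₀‖ = 1 ∧ ‖V z₀‖ = 1 ∧ ‖z₀ - x₀‖ < ε ∧ ‖V - U‖ < ε := by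
  classical
  have hsq : ε^2 < 1 := by nlinarith
  -- find a coordinate where the norm is nearly attained
  obtain ⟨i, hi⟩ : ∃ i : Fin n, 1 - ε^2/8 < |U x₀ i| := by
    by_contra hcon
    push_neg at hcon
    have : ‖U x₀‖ ≤ 1 - ε^2/8 := by
      rw [pi_norm_le_iff_of_nonneg (by nlinarith)]
      intro j
      rw [Real.norm_eq_abs]
      exact hcon j
    linarith
  set σ : ℝ := if 0 ≤ U x₀ i then 1 else -1 with hσdef
  have hσ1 : |σ| = 1 := by
    rw [hσdef]; split_ifs <;> simp
  have hσsq : σ * σ = 1 := by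
    rw [hσdef]; split_ifs <;> norm_num
  have hσUx₀ : σ * U x₀ i = |U x₀ i| := by
    rw [hσdef]; split_ifs with h
    · rw [one_mul, abs_of_nonneg h]
    · push_neg at h
      rw [abs_of_neg h]; ring
  set f : X →L[ℝ] ℝ := σ • ((ContinuousLinearMap.proj i).comp U) with hfdef
  have hfapply : ∀ x : X, f x = σ * U x i := fun x => rfl
  have hf1 : ‖f‖ ≤ 1 := by
    refine ContinuousLinearMap.opNorm_le_bound _ zero_le_one ?_
    intro x
    rw [hfapply, Real.norm_eq_abs, abs_mul, hσ1, one_mul, one_mul]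
    calc |U x i| = ‖U x i‖ := (Real.norm_eq_abs _).symm
      _ ≤ ‖U x‖ := norm_le_pi_norm (U x) i
      _ ≤ ‖U‖ * ‖x‖ := U.le_opNorm x
      _ = ‖x‖ := by rw [hU, one_mul]
  have hfx₀ : 1 - ε^2/8 < f x₀ := by
    rw [hfapply, hσUx₀]; exact hi
  obtain ⟨g, z, hg1, hz1, hgz, hzx, hgf⟩ := bpb_scalar f hf1 hfx₀
  -- build the new operator
  set W : X →L[ℝ] (Fin n → ℝ) :=
    ContinuousLinearMap.smulRight (g - f) (Pi.single i σ) with hWdef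
  set V : X →L[ℝ] (Fin n → ℝ)  := U + W with hVdef
  have hVapply : ∀ (x : X) (j : Fin n),
      V x j = U x j + (g x - f x) * (Pi.single i σ : Fin n → ℝ) j := fun x j => rfl
  have hVi : ∀ x : X, V x i = σ * g x := by
    intro x
    have hσfx : σ * f x = U x i := by
      rw [hfapply, ← mul_assoc, hσsq, one_mul]
    rw [hVapply, Pi.single_eq_same]
    linear_combination -hσfx
  have hVle : ∀ x : X, ‖V x‖ ≤ ‖x‖ := by
    intro x
    rw [pi_norm_le_iff_of_nonneg (norm_nonneg x)]
    intro j
    rcases eq_or_ne j i with rfl | hj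
    · rw [Real.norm_eq_abs, hVi x, abs_mul, hσ1, one_mul]
      calc |g x| = ‖g x‖ := (Real.norm_eq_abs _).symm
        _ ≤ ‖g‖ * ‖x‖ := g.le_opNorm x
        _ = ‖x‖ := by rw [hg1, one_mul]
    · have hVj : V x j = U x j := by
        rw [hVapply, Pi.single_eq_of_ne hj, mul_zero, add_zero]
      rw [hVj]
      calc ‖U x j‖ ≤ ‖U x‖ := norm_le_pi_norm (U x) j
        _ ≤ ‖U‖ * ‖x‖ := U.le_opNorm x
        _ = ‖x‖ := by rw [hU, one_mul]
  have hV1 : ‖V‖ ≤ 1 := by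
    refine ContinuousLinearMap.opNorm_le_bound _ zero_le_one ?_
    intro x
    rw [one_mul]
    exact hVle x
  have hVznorm : ‖V z‖ = 1 := by
    refine le_antisymm (by rw [← hz1]; exact hVle z) ?_
    calc (1:ℝ) = |σ| := hσ1.symm
      _ = ‖V z i‖ := by rw [Real.norm_eq_abs, hVi z, hgz, mul_one]
      _ ≤ ‖V z‖ := norm_le_pi_norm (V z) i
  have hVnorm : ‖V‖ = 1 := by
    refine le_antisymm hV1 ?_
    have h1 := V.le_opNorm z
    rw [hVznorm, hz1, mul_one] at h1
    exact h1
  have hVU : ‖V - U‖ = ‖g - f‖ := by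
    have h1 : V - U = W := by rw [hVdef]; abel
    rw [h1, hWdef, ContinuousLinearMap.norm_smulRight_apply, Pi.norm_single,
      Real.norm_eq_abs, hσ1, mul_one]
  refine ⟨V, z, hVnorm, hz1, hVznorm, ?_, ?_⟩
  · have heq : (ε^2/8) / (ε/4) = ε/2 := by
      field_simp
      ring
    rw [heq] at hzx
    linarith
  · rw [hVU]
    calc ‖g - f‖ ≤ ε^2/8 + 2 * (ε/4) := hgf
      _ < ε := by nlinarith


end Aux

/-- A uniform Bishop-Phelps-Bollobás property for operators into `ℓ∞ⁿ`, with
`η'(ε)` independent of `n` and of `X`. -/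
theorem stmt15 (ε : ℝ) (hε : 0 < ε) (hε1 : ε < 1) :
    ∃ η' : ℝ, 0 < η' ∧ η' < 1 ∧
      ∀ (n : ℕ), 0 < n →
        ∀ (X : Type u) [NormedAddCommGroup X] [NormedSpace ℝ X] [CompleteSpace X],
          ∀ (U : X →L[ℝ] (Fin n → ℝ)) (x₀ : X),
            ‖U‖ = 1 → ‖x₀‖ = 1 → 1 - η' < ‖U x₀‖ →
            ∃ (V : X →L[ℝ] (Fin n → ℝ)) (z₀ : X),
              ‖V‖ = 1 ∧ ‖z₀‖ = 1 ∧ ‖V z₀‖ = 1 ∧ ‖z₀ - x₀‖ < ε ∧ ‖V - U‖ < ε := by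
  refine ⟨ε^2/8, by positivity, by nlinarith, ?_⟩
  intro n hn X _ _ _ U x₀ hU hx₀ hUx₀
  exact stmt15' ε hε hε1 hn U x₀ hU hx₀ hUx₀
    (fun f hf hfx =>
      bpb_scalar f x₀ hf hx₀ (ε^2/8) (ε/4) (by positivity) (by positivity)
        (by nlinarith) hfx
        (ekeland_ball f hf x₀ hx₀.le (ε^2/8) (ε/4) (by positivity) (by positivity)
          (by linarith)))
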